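/- For every integer d ≥ 3 there is a constant C(d) > 0 such that for all n ≥ 1, ∫₀^π θ^{−λ} v_n(θ) (sin θ)^{2λ} dθ ≤ C(d) n^{λ/2}, where λ = (d−2)/2 and v_n(θ) = (cos(θ/2))^{2n} / I_{n,d} with I_{n,d} = ∫₀^π (cos(t/2))^{2n} (sin t)^{2λ} dt. -/

import Mathlib

open Real

lemma aux_sin_half {θ : ℝ} (h0 : 0 ≤ θ) (hπ : θ ≤ π) : θ / 8 ≤ Real.sin (θ / 2) := by
  rcases eq_or_lt_of_le h0 with h | h
  · simp [← h]
  rcases le_or_gt θ 1 with h1 | h1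
  · have h3 := Real.sin_gt_sub_cube (by positivity : 0 < θ/2)
    have hsq : θ^2 ≤ 1 := by nlinarith
    have hc : θ^3 ≤ θ := by nlinarith [mul_le_mul_of_nonneg_left hsq h0]
    nlinarith [h3, hc]
  · have hmono : Real.sin (1/2) ≤ Real.sin (θ/2) := by
      have hpi := Real.pi_gt_three
      apply Real.strictMonoOn_sin.monotoneOn
      · constructor <;> [linarith; linarith]
      · constructor <;> [linarith; linarith]
      · linarith
    have := Real.sin_gt_sub_cube (by norm_num : (0:ℝ) < 1/2)
    have hpi2 := Real.pi_lt_d2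
    nlinarith

lemma aux_bernoulli_inv (n : ℕ) {x : ℝ} (hx0 : 0 ≤ x) (hx1 : x ≤ 1) :
    (1 - x) ^ n ≤ 1 / (1 + n * x) := by
  have hpos : (0:ℝ) < 1 + n * x := by positivity
  rw [le_div_iff₀ hpos]
  have h1 : (1:ℝ) + n * x ≤ (1 + x) ^ n := one_add_mul_le_pow (by linarith) n
  calc (1 - x) ^ n * (1 + n * x) ≤ (1 - x) ^ n * (1 + x) ^ n := by
        exact mul_le_mul_of_nonneg_left h1 (pow_nonneg (by linarith) n)
    _ = ((1 - x) * (1 + x)) ^ n := (mul_pow _ _ _).symm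
    _ ≤ 1 := pow_le_one₀ (by nlinarith) (by nlinarith)

lemma aux_cos_pow_le (n : ℕ) (θ : ℝ) :
    Real.cos (θ/2) ^ (2*n) ≤ 1 / (1 + n * Real.sin (θ/2) ^ 2) := by
  have h : Real.cos (θ/2) ^ (2*n) = (1 - Real.sin (θ/2) ^ 2) ^ n := by
    rw [pow_mul, Real.cos_sq']
  rw [h]
  exact aux_bernoulli_inv n (sq_nonneg _) (Real.sin_sq_le_one _)

lemma aux_cos_pow_ge {n : ℕ} (hn : 1 ≤ n) {θ : ℝ} (hθ : θ ^ 2 ≤ 1 / (n:ℝ)) :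
    (3/4 : ℝ) ≤ Real.cos (θ/2) ^ (2*n) := by
  have hn0 : (0:ℝ) < n := by exact_mod_cast hn
  have hn1 : (1:ℝ) ≤ n := by exact_mod_cast hn
  have h1 : 1 - 1/(8*(n:ℝ)) ≤ Real.cos (θ/2) := by
    have := Real.one_sub_sq_div_two_le_cos (x := θ/2)
    have h8 : θ^2/8 ≤ 1/(8*(n:ℝ)) := by
      have : θ^2/8 ≤ (1/(n:ℝ))/8 := by linarith
      calc θ^2/8 ≤ (1/(n:ℝ))/8 := this
        _ = 1/(8*(n:ℝ)) := by ring
    nlinarith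
  have h2 : (0:ℝ) ≤ 1 - 1/(8*(n:ℝ)) := by
    have : 1/(8*(n:ℝ)) ≤ 1/8 := by
      apply div_le_div_of_nonneg_left <;> nlinarith
    linarith
  calc (3/4 : ℝ) = 1 + (2*n : ℕ) * (-(1/(8*(n:ℝ)))) := by
        push_cast
        field_simp
        ring
    _ ≤ (1 + (-(1/(8*(n:ℝ))))) ^ (2*n) := one_add_mul_le_pow (by nlinarith) (2*n)
    _ ≤ Real.cos (θ/2) ^ (2*n) := by
        apply pow_le_pow_left₀ (by linarith) (by linarith) _

set_option maxHeartbeats 1000000 in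
theorem vallee_poussin_neg_lambda_moment (d : ℕ) (hd : 3 ≤ d) :
    ∃ C > (0:ℝ), ∀ n : ℕ, 1 ≤ n →
      (∫ θ in (0:ℝ)..π,
          θ ^ (-(((d:ℝ) - 2)/2)) *
            (Real.cos (θ/2) ^ (2*n) /
              ∫ t in (0:ℝ)..π, Real.cos (t/2) ^ (2*n) * Real.sin t ^ (d - 2)) *
            Real.sin θ ^ (d - 2)) ≤
        C * (n:ℝ) ^ ((((d:ℝ) - 2)/2)/2) := by
  have hπ0 := Real.pi_pos
  have hπ3 := Real.pi_gt_three
  have hd3 : (3:ℝ) ≤ (d:ℝ) := by exact_mod_cast hd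
  set l : ℝ := ((d:ℝ) - 2)/2 with hldef
  have hl0 : 0 < l := by rw [hldef]; linarith
  have hdme : (2:ℕ) ≤ d := by omega
  have hdc2 : ((d - 2 : ℕ) : ℝ) = 2 * l := by
    rw [hldef, Nat.cast_sub hdme]; push_cast; ring
  have hdc1 : ((d - 1 : ℕ) : ℝ) = (d:ℝ) - 1 := by
    rw [Nat.cast_sub (by omega : (1:ℕ) ≤ d)]; push_cast; ring
  have hd21 : d - 2 + 1 = d - 1 := by omega
  set c₂ : ℝ := (3/4 : ℝ)^(d-1) / ((d:ℝ) - 1) with hc2def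
  have hc2pos : 0 < c₂ := div_pos (by positivity) (by linarith)
  refine ⟨1 + 65 / c₂, by positivity, ?_⟩
  intro n hn
  have hn1 : (1:ℝ) ≤ (n:ℝ) := by exact_mod_cast hn
  have hn0 : (0:ℝ) < (n:ℝ) := by linarith
  set a : ℝ := (n:ℝ) ^ (-(1/2) : ℝ) with hadef
  set p : ℝ := (n:ℝ) ^ (l/2) with hpdef
  have hap : 0 < a := Real.rpow_pos_of_pos hn0 _
  have hpp : 0 < p := Real.rpow_pos_of_pos hn0 _
  have ha1 : a ≤ 1 := Real.rpow_le_one_of_one_le_of_nonpos hn1 (by norm_num)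
  have haπ : a ≤ π := by linarith
  have ha2 : a ^ 2 = ((n:ℝ))⁻¹ := by
    rw [hadef, ← Real.rpow_natCast ((n:ℝ) ^ (-(1/2):ℝ)) 2, ← Real.rpow_mul hn0.le]
    norm_num
    exact (Real.rpow_neg_one _)
  have hp2 : p ^ 2 = (n:ℝ) ^ (l : ℝ) := by
    rw [hpdef, ← Real.rpow_natCast ((n:ℝ) ^ (l/2)) 2, ← Real.rpow_mul hn0.le]
    norm_num
  have had2 : a ^ (d-2) = (n:ℝ) ^ (-l : ℝ) := by
    rw [hadef, ← Real.rpow_natCast ((n:ℝ) ^ (-(1/2):ℝ)) (d-2), ← Real.rpow_mul hn0.le, hdc2]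
    ring_nf
  have hap2 : a ^ (d-2) * p ^ 2 = 1 := by
    rw [had2, hp2, ← Real.rpow_add hn0]
    simp
  have hpa : p⁻¹ * a = p * a ^ (d-1) := by
    have h1 : a ^ (d-1) = a ^ (d-2) * a := by rw [← hd21, pow_succ]
    have h2 : a ^ (d-2) = (p^2)⁻¹ := eq_inv_of_mul_eq_one_left (by linear_combination hap2)
    rw [h1, h2]
    field_simp
  -- the two reference integrals
  set I : ℝ := ∫ t in (0:ℝ)..π, Real.cos (t/2) ^ (2*n) * Real.sin t ^ (d - 2) with hIdef
  set J : ℝ := ∫ t in (0:ℝ)..π, Real.cos (t/2) ^ (2*n) with hJdef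
  have hcont1 : Continuous fun t : ℝ => Real.cos (t/2) ^ (2*n) := by fun_prop
  have hcont2 : Continuous fun t : ℝ => Real.cos (t/2) ^ (2*n) * Real.sin t ^ (d - 2) := by
    fun_prop
  -- lower bound for I
  have hI_low : c₂ * a ^ (d-1) ≤ I := by
    have key : ∀ θ ∈ Set.Icc (0:ℝ) a,
        (3/4:ℝ)^(d-1) * θ^(d-2) ≤ Real.cos (θ/2) ^ (2*n) * Real.sin θ ^ (d - 2) := by
      rintro θ ⟨h0, hθa⟩
      rcases eq_or_lt_of_le h0 with h | h
      · rw [← h]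
        simp [zero_pow (by omega : d - 2 ≠ 0)]
      have hθ1 : θ ≤ 1 := le_trans hθa ha1
      have hθ2 : θ ^ 2 ≤ 1 / (n:ℝ) := by
        have := pow_le_pow_left₀ h0 hθa 2
        rw [ha2] at this
        rw [one_div]; exact this
      have hcos := aux_cos_pow_ge hn hθ2
      have hsin : 3/4 * θ ≤ Real.sin θ := by
        have h3 := Real.sin_gt_sub_cube h
        have hsq : θ^2 ≤ 1 := pow_le_one₀ h0 hθ1
        have hc : θ^3 ≤ θ := by
          calc θ^3 = θ * θ^2 := by ring
            _ ≤ θ * 1 := mul_le_mul_of_nonneg_left hsq h0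
            _ = θ := mul_one θ
        linarith [h3, hc]
      have hsinp : (3/4:ℝ)^(d-2) * θ^(d-2) ≤ Real.sin θ ^ (d-2) := by
        have := pow_le_pow_left₀ (by linarith : (0:ℝ) ≤ 3/4 * θ) hsin (d-2)
        rw [mul_pow] at this
        exact this
      have hsn : (0:ℝ) ≤ Real.sin θ ^ (d-2) := le_trans (by positivity) hsinp
      calc (3/4:ℝ)^(d-1) * θ^(d-2) = (3/4) * ((3/4:ℝ)^(d-2) * θ^(d-2)) := by
            rw [← hd21, pow_succ]; ring
        _ ≤ Real.cos (θ/2) ^ (2*n) * Real.sin θ ^ (d - 2) := by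
            apply mul_le_mul hcos hsinp (by positivity) (by positivity)
    have hI1 : (∫ θ in (0:ℝ)..a, (3/4:ℝ)^(d-1) * θ^(d-2)) ≤
        ∫ θ in (0:ℝ)..a, Real.cos (θ/2) ^ (2*n) * Real.sin θ ^ (d - 2) := by
      apply intervalIntegral.integral_mono_on hap.le
        (by apply Continuous.intervalIntegrable; fun_prop)
        (hcont2.intervalIntegrable _ _) key
    have hI2 : (∫ θ in (0:ℝ)..a, (3/4:ℝ)^(d-1) * θ^(d-2)) = c₂ * a ^ (d-1) := by
      rw [intervalIntegral.integral_const_mul, integral_pow, hd21]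
      rw [hc2def]
      rw [zero_pow (by omega : d - 1 ≠ 0)]
      rw [show ((d-2:ℕ):ℝ) + 1 = (d:ℝ) - 1 by rw [hdc2, hldef]; ring]
      field_simp
      ring
    have hI3 : (∫ θ in (0:ℝ)..a, Real.cos (θ/2) ^ (2*n) * Real.sin θ ^ (d - 2)) ≤ I := by
      apply intervalIntegral.integral_mono_interval le_rfl hap.le haπ
      · filter_upwards [MeasureTheory.ae_restrict_mem measurableSet_Ioc] with θ hθ
        have hs : 0 ≤ Real.sin θ := Real.sin_nonneg_of_nonneg_of_le_pi hθ.1.le hθ.2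
        exact mul_nonneg (by rw [pow_mul]; positivity) (pow_nonneg hs _)
      · exact hcont2.intervalIntegrable _ _
    linarith [hI2 ▸ hI1, hI3]
  have hIpos : 0 < I := lt_of_lt_of_le (by positivity) hI_low
  -- upper bound for J
  have hJ_up : J ≤ 65 * a := by
    have hsplit : (∫ θ in (0:ℝ)..a, Real.cos (θ/2) ^ (2*n)) +
        (∫ θ in a..π, Real.cos (θ/2) ^ (2*n)) = J :=
      intervalIntegral.integral_add_adjacent_intervals
        (hcont1.intervalIntegrable _ _) (hcont1.intervalIntegrable _ _)
    have h1 : (∫ θ in (0:ℝ)..a, Real.cos (θ/2) ^ (2*n)) ≤ a := by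
      have : (∫ θ in (0:ℝ)..a, Real.cos (θ/2) ^ (2*n)) ≤ ∫ θ in (0:ℝ)..a, (1:ℝ) := by
        apply intervalIntegral.integral_mono_on hap.le (hcont1.intervalIntegrable _ _)
          (by apply Continuous.intervalIntegrable; fun_prop)
        intro θ _
        rw [pow_mul]
        exact pow_le_one₀ (sq_nonneg _) (Real.cos_sq_le_one _)
      simpa using this
    have h2 : (∫ θ in a..π, Real.cos (θ/2) ^ (2*n)) ≤
        ∫ θ in a..π, (64/(n:ℝ)) * θ ^ (-2 : ℤ) := by
      apply intervalIntegral.integral_mono_on haπ (hcont1.intervalIntegrable _ _)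
      · apply ContinuousOn.intervalIntegrable
        apply ContinuousOn.mul continuousOn_const
        intro x hx
        rw [Set.uIcc_of_le haπ] at hx
        have hx0 : x ≠ 0 := ne_of_gt (lt_of_lt_of_le hap hx.1)
        exact (continuousAt_zpow₀ x _ (Or.inl hx0)).continuousWithinAt
      rintro θ ⟨hθa, hθπ⟩
      have hθ0 : 0 < θ := lt_of_lt_of_le hap hθa
      have hsh : θ/8 ≤ Real.sin (θ/2) := aux_sin_half hθ0.le hθπ
      have hsq : θ^2/64 ≤ Real.sin (θ/2)^2 := by
        have h' := pow_le_pow_left₀ (by positivity : (0:ℝ) ≤ θ/8) hsh 2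
        calc θ^2/64 = (θ/8)^2 := by ring
          _ ≤ _ := h'
      have hb := aux_cos_pow_le n θ
      have hd1 : 1/(1 + (n:ℝ) * Real.sin (θ/2)^2) ≤ 1/((n:ℝ) * (θ^2/64)) := by
        apply one_div_le_one_div_of_le (by positivity)
        linarith [mul_le_mul_of_nonneg_left hsq hn0.le]
      have hz : (64/(n:ℝ)) * θ ^ (-2 : ℤ) = 1/((n:ℝ) * (θ^2/64)) := by
        have h2' : θ ^ (-2 : ℤ) = (θ^2)⁻¹ := by
          rw [zpow_neg, show ((2:ℤ)) = ((2:ℕ):ℤ) from rfl, zpow_natCast]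
        rw [h2']
        field_simp
      rw [hz]
      exact le_trans hb hd1
    have h3 : (∫ θ in a..π, (64/(n:ℝ)) * θ ^ (-2 : ℤ)) ≤ 64 * a := by
      rw [intervalIntegral.integral_const_mul, integral_zpow
        (Or.inr ⟨by norm_num, by
          intro hmem
          rw [Set.mem_uIcc] at hmem
          rcases hmem with ⟨h', _⟩ | ⟨_, h'⟩ <;> nlinarith⟩)]
      have hana : (n:ℝ) * a ^ 2 = 1 := by rw [ha2]; exact mul_inv_cancel₀ hn0.ne'
      have hainv : a⁻¹ = (n:ℝ) * a := by
        have hh : a * ((n:ℝ) * a) = 1 := by linear_combination hana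
        exact inv_eq_of_mul_eq_one_right hh
      have hπinv : (0:ℝ) ≤ π⁻¹ := by positivity
      have h64 : (64/(n:ℝ)) * ((n:ℝ)*a - π⁻¹) = 64*a - (64/(n:ℝ))*π⁻¹ := by
        field_simp
      have hnn : 0 ≤ (64/(n:ℝ))*π⁻¹ := by positivity
      norm_num [zpow_neg, zpow_one, hainv]
      nlinarith [h64, hnn]
    linarith
  -- the main pointwise bound and assembly
  set g : ℝ → ℝ := fun θ => θ ^ (-l) * Real.cos (θ/2) ^ (2*n) * Real.sin θ ^ (d - 2)
    with hgdef
  set b : ℝ → ℝ := fun θ => Real.cos (θ/2) ^ (2*n) * (p * Real.sin θ ^ (d - 2) + p⁻¹) / 2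
    with hbdef
  have hb_cont : Continuous b := by rw [hbdef]; fun_prop
  have hpt : ∀ θ ∈ Set.Icc (0:ℝ) π, g θ ≤ b θ := by
    rintro θ ⟨h0, hθπ⟩
    have hs0 : 0 ≤ Real.sin θ := Real.sin_nonneg_of_nonneg_of_le_pi h0 hθπ
    have hsθ : Real.sin θ ≤ θ := Real.sin_le h0
    have hc0 : 0 ≤ Real.cos (θ/2) ^ (2*n) := by rw [pow_mul]; positivity
    set u : ℝ := Real.sin θ ^ (l : ℝ) with hudef
    have hu0 : 0 ≤ u := Real.rpow_nonneg hs0 _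
    have hu2 : Real.sin θ ^ (d - 2) = u ^ 2 := by
      rw [hudef, ← Real.rpow_natCast (Real.sin θ ^ (l:ℝ)) 2, ← Real.rpow_mul hs0,
        ← Real.rpow_natCast (Real.sin θ) (d-2), hdc2]
      ring_nf
    have hθu : θ ^ (-l) * u ≤ 1 := by
      rcases eq_or_lt_of_le h0 with h | h
      · have hsz : Real.sin θ = 0 := by rw [← h]; simp
        rw [hudef, hsz, Real.zero_rpow hl0.ne']
        simp
      · have h1 : u ≤ θ ^ (l:ℝ) := by
          rw [hudef]; exact Real.rpow_le_rpow hs0 hsθ hl0.le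
        have h2 : θ ^ (-l) * u ≤ θ ^ (-l) * θ ^ (l:ℝ) :=
          mul_le_mul_of_nonneg_left h1 (Real.rpow_nonneg h.le _)
        have h3 : θ ^ (-l) * θ ^ (l:ℝ) = 1 := by
          rw [← Real.rpow_add h]; simp
        linarith
    have hamgm : u ≤ (p * u^2 + p⁻¹) / 2 := by
      have hhh : p * (p * u^2 + p⁻¹ - 2*u) = (p*u - 1)^2 := by
        field_simp
        ring
      have h9 : 0 ≤ p * (p * u^2 + p⁻¹ - 2*u) := by rw [hhh]; exact sq_nonneg _
      have h10 : 0 ≤ p * u^2 + p⁻¹ - 2*u := (mul_nonneg_iff_of_pos_left hpp).mp h9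
      linarith only [h10]
    have hgu : g θ ≤ Real.cos (θ/2) ^ (2*n) * u := by
      simp only [hgdef]
      rw [hu2]
      calc θ ^ (-l) * Real.cos (θ/2) ^ (2*n) * u^2
          = (θ ^ (-l) * u) * (Real.cos (θ/2) ^ (2*n) * u) := by ring
        _ ≤ 1 * (Real.cos (θ/2) ^ (2*n) * u) :=
            mul_le_mul_of_nonneg_right hθu (mul_nonneg hc0 hu0)
        _ = Real.cos (θ/2) ^ (2*n) * u := one_mul _
    have hbu : Real.cos (θ/2) ^ (2*n) * u ≤ b θ := by
      simp only [hbdef]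
      rw [hu2]
      calc Real.cos (θ/2) ^ (2*n) * u
          ≤ Real.cos (θ/2) ^ (2*n) * ((p * u^2 + p⁻¹)/2) :=
            mul_le_mul_of_nonneg_left hamgm hc0
        _ = Real.cos (θ/2) ^ (2*n) * (p * u^2 + p⁻¹) / 2 := by ring
    linarith
  have hg0 : ∀ θ ∈ Set.Ioc (0:ℝ) π, 0 ≤ g θ := by
    rintro θ ⟨h0, hθπ⟩
    simp only [hgdef]
    have hs0 : 0 ≤ Real.sin θ := Real.sin_nonneg_of_nonneg_of_le_pi h0.le hθπ
    exact mul_nonneg (mul_nonneg (Real.rpow_nonneg h0.le _) (by rw [pow_mul]; positivity))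
      (pow_nonneg hs0 _)
  have hb0 : ∀ θ ∈ Set.Icc (0:ℝ) π, 0 ≤ b θ := by
    rintro θ ⟨h0, hθπ⟩
    simp only [hbdef]
    have hs0 : 0 ≤ Real.sin θ := Real.sin_nonneg_of_nonneg_of_le_pi h0 hθπ
    have hc0 : 0 ≤ Real.cos (θ/2) ^ (2*n) := by rw [pow_mul]; positivity
    have : 0 ≤ p * Real.sin θ ^ (d-2) + p⁻¹ := by positivity
    positivity
  have hgm : MeasureTheory.AEStronglyMeasurable g
      (MeasureTheory.volume.restrict (Set.uIoc (0:ℝ) π)) := by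
    rw [Set.uIoc_of_le hπ0.le]
    apply ContinuousOn.aestronglyMeasurable _ measurableSet_Ioc
    apply ContinuousOn.mul
    apply ContinuousOn.mul
    · exact fun x hx => ((Real.continuousAt_rpow_const x (-l)
        (Or.inl (ne_of_gt hx.1))).continuousWithinAt)
    · exact hcont1.continuousOn
    · exact (Continuous.continuousOn (by fun_prop))
  have hgi : IntervalIntegrable g MeasureTheory.volume 0 π := by
    apply (hb_cont.intervalIntegrable 0 π).mono_fun hgm
    filter_upwards [MeasureTheory.ae_restrict_mem measurableSet_uIoc] with θ hθ
    rw [Set.uIoc_of_le hπ0.le] at hθ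
    have h1 := hg0 θ hθ
    have h2 := hpt θ ⟨hθ.1.le, hθ.2⟩
    have h3 := hb0 θ ⟨hθ.1.le, hθ.2⟩
    rw [Real.norm_eq_abs, Real.norm_eq_abs, abs_of_nonneg h1, abs_of_nonneg h3]
    exact h2
  have hmono : (∫ θ in (0:ℝ)..π, g θ) ≤ ∫ θ in (0:ℝ)..π, b θ :=
    intervalIntegral.integral_mono_on hπ0.le hgi (hb_cont.intervalIntegrable _ _) hpt
  have hbval : (∫ θ in (0:ℝ)..π, b θ) = p/2 * I + p⁻¹/2 * J := by
    have hbeq : Set.EqOn b (fun θ => p/2 * (Real.cos (θ/2) ^ (2*n) * Real.sin θ ^ (d-2))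
        + p⁻¹/2 * (Real.cos (θ/2) ^ (2*n))) (Set.uIcc (0:ℝ) π) := by
      intro θ _
      simp only [hbdef]
      ring
    rw [intervalIntegral.integral_congr hbeq, intervalIntegral.integral_add,
      intervalIntegral.integral_const_mul, intervalIntegral.integral_const_mul]
    · exact (Continuous.intervalIntegrable (by fun_prop) _ _)
    · exact (Continuous.intervalIntegrable (by fun_prop) _ _)
  -- conclude
  have hgoalI : (∫ θ in (0:ℝ)..π,
      θ ^ (-l) * (Real.cos (θ/2) ^ (2*n) / I) * Real.sin θ ^ (d - 2))
      = (∫ θ in (0:ℝ)..π, g θ) * I⁻¹ := by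
    rw [← intervalIntegral.integral_mul_const]
    apply intervalIntegral.integral_congr
    intro θ _
    simp only [hgdef]
    ring
  rw [hgoalI]
  have hN : (∫ θ in (0:ℝ)..π, g θ) ≤ (1 + 65/c₂) * p * I := by
    have hJI : p⁻¹/2 * J ≤ 65/(2*c₂) * p * I := by
      have s1 : p⁻¹/2 * J ≤ p⁻¹/2 * (65 * a) :=
        mul_le_mul_of_nonneg_left hJ_up (by positivity)
      have s2 : p⁻¹/2 * (65*a) = 65/2 * (p * a^(d-1)) := by
        rw [show p⁻¹/2 * (65*a) = 65/2 * (p⁻¹ * a) by ring, hpa]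
      have t1 := mul_le_mul_of_nonneg_left hI_low
        (le_of_lt (by positivity : (0:ℝ) < 65/(2*c₂)*p))
      have t2 : 65/(2*c₂)*p * (c₂*a^(d-1)) = 65/2*(p*a^(d-1)) := by
        field_simp
      linarith only [s1, s2, t1, t2]
    have hhalf : p/2 * I ≤ p * I := by
      have := mul_pos hpp hIpos
      linarith only [this]
    have hC : 65/(2*c₂) * p * I ≤ 65/c₂ * p * I := by
      have hd' : (65:ℝ)/(2*c₂) ≤ 65/c₂ := by
        rw [div_le_div_iff₀ (by positivity) (by positivity)]
        linarith only [hc2pos]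
      have := mul_le_mul_of_nonneg_right hd' (le_of_lt (mul_pos hpp hIpos))
      calc 65/(2*c₂) * p * I = 65/(2*c₂) * (p * I) := by ring
        _ ≤ 65/c₂ * (p * I) := this
        _ = 65/c₂ * p * I := by ring
    linarith only [hmono, hbval, hJI, hhalf, hC]
  calc (∫ θ in (0:ℝ)..π, g θ) * I⁻¹ ≤ ((1 + 65/c₂) * p * I) * I⁻¹ :=
        mul_le_mul_of_nonneg_right hN (by positivity)
    _ = (1 + 65/c₂) * p := by
        field_simp
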